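/- The second homotopy group of the 3-sphere is trivial: for any basepoint x ∈ S³, the homotopy group π₂(S³, x) has exactly one element. -/

import Mathlib

open scoped Topology

open scoped unitInterval
open Metric Set

noncomputable section

namespace PiTwoAux

notation "EE" => EuclideanSpace ℝ (Fin 4)

lemma contDiff_mvEval (q : MvPolynomial (Fin 2) ℝ) :
    ContDiff ℝ 1 (fun z : Fin 2 → ℝ => MvPolynomial.aeval z q) := by
  induction q using MvPolynomial.induction_on with
  | C a => simpa using contDiff_const
  | add p q hp hq => simpa [map_add] using hp.add hq
  | mul_X p i hp =>
      simpa [map_mul] using hp.mul ((ContinuousLinearMap.proj i : (Fin 2 → ℝ) →L[ℝ] ℝ).contDiff)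

lemma norm_nz {v : EE} (hv : v ≠ 0) : ‖‖v‖⁻¹ • v‖ = 1 := by
  rw [norm_smul, norm_inv, norm_norm, inv_mul_cancel₀ (norm_ne_zero_iff.2 hv)]

lemma nz_sub_self {v : EE} (hv : v ≠ 0) : ‖‖v‖⁻¹ • v - v‖ = |1 - ‖v‖| := by
  have h : ‖v‖⁻¹ • v - v = (‖v‖⁻¹ - 1) • v := by rw [sub_smul, one_smul]
  have hn : ‖v‖ ≠ 0 := norm_ne_zero_iff.2 hv
  rw [h, norm_smul, Real.norm_eq_abs, ← abs_of_nonneg (norm_nonneg v), ← abs_mul]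
  rw [abs_of_nonneg (norm_nonneg v), sub_mul, inv_mul_cancel₀ hn, one_mul]

lemma eq_smul_nz {v : EE} (hv : v ≠ 0) : v = ‖v‖ • (‖v‖⁻¹ • v) := by
  rw [smul_smul, mul_inv_cancel₀ (norm_ne_zero_iff.2 hv), one_smul]

lemma boundary_closed : IsClosed (Cube.boundary (Fin 2)) := by
  have h : Cube.boundary (Fin 2) =
      ⋃ i : Fin 2, ((fun y : Fin 2 → I => y i) ⁻¹' {0} ∪ (fun y => y i) ⁻¹' {1}) := by
    ext y; simp [Cube.boundary]
  rw [h]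
  exact isClosed_iUnion_of_finite fun i =>
    ((isClosed_singleton.preimage (continuous_apply i)).union
      (isClosed_singleton.preimage (continuous_apply i)))

lemma boundary_nonempty : (Cube.boundary (Fin 2)).Nonempty :=
  ⟨fun _ => 0, 0, Or.inl rfl⟩


set_option maxHeartbeats 2000000 in
open MvPolynomial in
lemma genLoop_homotopic_const (x : Metric.sphere (0 : EE) 1)
    (γ : GenLoop (Fin 2) (Metric.sphere (0 : EE) 1) x) :
    GenLoop.Homotopic γ GenLoop.const := by
  classical
  set bd := Cube.boundary (Fin 2) with hbd
  -- the underlying map into EE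
  set F : (Fin 2 → I) → EE := fun y => (γ y : EE) with hFdef
  have hFc : Continuous F := continuous_subtype_val.comp γ.1.continuous
  have hF1 : ∀ y, ‖F y‖ = 1 := fun y => mem_sphere_zero_iff_norm.mp (γ y).2
  have hx1 : ‖(x : EE)‖ = 1 := mem_sphere_zero_iff_norm.mp x.2
  have hbx : ∀ y ∈ bd, F y = (x : EE) := fun y hy => congrArg Subtype.val (γ.2 y hy)
  -- uniform continuity
  obtain ⟨δ, hδ0, hδ⟩ := Metric.uniformContinuous_iff.mp
    (CompactSpace.uniformContinuous_of_continuous hFc) (1/25) (by norm_num)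
  -- Stone-Weierstrass approximation by polynomials
  set c : Fin 2 → C(Fin 2 → I, ℝ) := fun i =>
    ⟨fun y => (y i : ℝ), continuous_subtype_val.comp (continuous_apply i)⟩ with hcdef
  set A := (MvPolynomial.aeval (R := ℝ) c).range with hA
  have hsep : A.SeparatesPoints := by
    intro y z hyz
    obtain ⟨i, hi⟩ : ∃ i, y i ≠ z i := by
      by_contra h; push_neg at h; exact hyz (funext h)
    exact ⟨c i, ⟨c i, ⟨⟨MvPolynomial.X i, MvPolynomial.aeval_X c i⟩, rfl⟩⟩,
      fun h => hi (Subtype.ext h)⟩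
  have key : ∀ j : Fin 4, ∃ q : MvPolynomial (Fin 2) ℝ,
      ∀ y, |(MvPolynomial.aeval (fun i => (y i : ℝ)) q : ℝ) - F y j| < 1/100 := by
    intro j
    obtain ⟨g, hg⟩ := ContinuousMap.exists_mem_subalgebra_near_continuous_of_separatesPoints
      A hsep (fun y => F y j) ((continuous_apply j).comp ((PiLp.continuous_ofLp 2 _).comp hFc)) (1/100) (by norm_num)
    obtain ⟨q, hq⟩ := g.2
    refine ⟨q, fun y => ?_⟩
    have h2 : (g : C(Fin 2 → I, ℝ)) y = MvPolynomial.aeval (fun i => (y i : ℝ)) q := by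
      rw [← hq]
      exact MvPolynomial.comp_aeval_apply (f := c) (ContinuousMap.evalAlgHom ℝ ℝ y) q
    have := hg y
    rw [h2] at this
    simpa [Real.norm_eq_abs] using this
  choose p hp using key
  -- the polynomial map into Euclidean space
  set P : (Fin 2 → ℝ) → EE := fun z =>
    (EuclideanSpace.equiv (Fin 4) ℝ).symm (fun j => MvPolynomial.aeval z (p j)) with hPdef
  have hPc : ContDiff ℝ 1 P :=
    ((EuclideanSpace.equiv (Fin 4) ℝ).symm.contDiff).comp
      (contDiff_pi.mpr fun j => contDiff_mvEval (p j))
  set ι : (Fin 2 → I) → (Fin 2 → ℝ) := fun y i => (y i : ℝ) with hι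
  have hιc : Continuous ι := continuous_pi fun i => continuous_subtype_val.comp (continuous_apply i)
  set g : (Fin 2 → I) → EE := fun y => P (ι y) with hgdef
  have hgc : Continuous g := hPc.continuous.comp hιc
  have hgF : ∀ y, ‖g y - F y‖ ≤ 1/50 := by
    intro y
    have hnorm : ‖g y - F y‖ = Real.sqrt (∑ j : Fin 4, ‖(g y - F y) j‖ ^ 2) :=
      EuclideanSpace.norm_eq _
    rw [hnorm]
    have hb : ∀ j : Fin 4, ‖(g y - F y) j‖ ^ 2 ≤ (1/100 : ℝ)^2 := by
      intro j
      have h1 : (g y - F y) j = MvPolynomial.aeval (ι y) (p j) - F y j := rfl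
      rw [h1, Real.norm_eq_abs]
      have := (hp j y).le
      nlinarith [abs_nonneg ((MvPolynomial.aeval (fun i => (y i : ℝ)) (p j) : ℝ) - F y j)]
    have hsum : (∑ j : Fin 4, ‖(g y - F y) j‖ ^ 2) ≤ (1/50 : ℝ)^2 := by
      calc (∑ j : Fin 4, ‖(g y - F y) j‖ ^ 2) ≤ ∑ _j : Fin 4, (1/100 : ℝ)^2 :=
            Finset.sum_le_sum fun j _ => hb j
        _ ≤ (1/50 : ℝ)^2 := by simp; norm_num
    calc Real.sqrt (∑ j : Fin 4, ‖(g y - F y) j‖ ^ 2) ≤ Real.sqrt ((1/50:ℝ)^2) :=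
          Real.sqrt_le_sqrt hsum
      _ = 1/50 := by rw [Real.sqrt_sq (by norm_num)]
  -- cutoff function vanishing on the boundary
  have hbdne : bd.Nonempty := boundary_nonempty
  set φ : (Fin 2 → I) → ℝ := fun y => min 1 (infDist y bd / δ) with hφdef
  have hφc : Continuous φ := continuous_const.min ((continuous_infDist_pt _).div_const δ)
  have hφ0 : ∀ y, 0 ≤ φ y := fun y =>
    le_min zero_le_one (div_nonneg infDist_nonneg hδ0.le)
  have hφ1 : ∀ y, φ y ≤ 1 := fun y => min_le_left _ _
  have hφbd : ∀ y ∈ bd, φ y = 0 := by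
    intro y hy
    simp [hφdef, infDist_zero_of_mem hy]
  have hφx : ∀ y, φ y < 1 → ‖F y - x‖ < 1/25 := by
    intro y hy
    have h1 : infDist y bd / δ < 1 := by
      by_contra h
      push_neg at h
      simp [hφdef, min_eq_left h] at hy
    have h2 : infDist y bd < δ := (div_lt_one hδ0).mp h1
    obtain ⟨z, hz, hdz⟩ := (infDist_lt_iff hbdne).mp h2
    have := hδ hdz
    rwa [hbx z hz, dist_eq_norm] at this
  -- the deformed family of maps
  set w : ℝ → (Fin 2 → I) → EE := fun t y => F y + (t * φ y) • (g y - F y) with hwdef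
  have hw_near : ∀ t ∈ Icc (0:ℝ) 1, ∀ y, ‖w t y - F y‖ ≤ 1/50 := by
    intro t ht y
    have h1 : w t y - F y = (t * φ y) • (g y - F y) := by simp [hwdef]
    rw [h1, norm_smul, Real.norm_eq_abs]
    have h2 : |t * φ y| ≤ 1 := by
      rw [abs_mul, abs_of_nonneg ht.1, abs_of_nonneg (hφ0 y)]
      exact mul_le_one₀ ht.2 (hφ0 y) (hφ1 y)
    calc |t * φ y| * ‖g y - F y‖ ≤ 1 * (1/50) :=
          mul_le_mul h2 (hgF y) (norm_nonneg _) zero_le_one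
      _ = 1/50 := one_mul _
  have hw_norm : ∀ t ∈ Icc (0:ℝ) 1, ∀ y, 49/50 ≤ ‖w t y‖ := by
    intro t ht y
    have h1 := hw_near t ht y
    have h2 := norm_sub_norm_le (F y) (w t y)
    rw [norm_sub_rev (F y) (w t y), hF1 y] at h2
    linarith
  have hw_ne : ∀ t ∈ Icc (0:ℝ) 1, ∀ y, w t y ≠ 0 := by
    intro t ht y h
    have := hw_norm t ht y
    rw [h, norm_zero] at this
    norm_num at this
  -- choosing the missed point via dimension counting
  set Q : ℝ × (Fin 2 → ℝ) → EE := fun sz => sz.1 • P sz.2 with hQdef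
  have hQc : ContDiff ℝ 1 Q := contDiff_fst.smul (hPc.comp contDiff_snd)
  have hdense : Dense (Set.range Q)ᶜ := by
    apply hQc.dense_compl_range_of_finrank_lt_finrank
    simp only [Module.finrank_prod, Module.finrank_pi, Module.finrank_self,
      finrank_euclideanSpace_fin]
    norm_num [Fintype.card_fin]
  obtain ⟨v, hvmem, hvdist⟩ := hdense.exists_dist_lt (-(x : EE)) (by norm_num : (0:ℝ) < 1/4)
  have hvx : ‖v + (x : EE)‖ < 1/4 := by
    have : dist (-(x : EE)) v = ‖v + (x : EE)‖ := by
      rw [dist_comm, dist_eq_norm, sub_neg_eq_add]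
    rwa [this] at hvdist
  have hvnorm : 3/4 ≤ ‖v‖ := by
    have h1 := norm_sub_norm_le ((x : EE)) (v + (x : EE))
    have h2 : ‖(x : EE) - (v + (x : EE))‖ = ‖v‖ := by
      rw [← norm_neg]; congr 1; abel
    rw [h2, hx1] at h1
    linarith
  have hvne : v ≠ 0 := by
    intro h
    rw [h, norm_zero] at hvnorm
    norm_num at hvnorm
  set pv : EE := ‖v‖⁻¹ • v with hpvdef
  have hpv1 : ‖pv‖ = 1 := norm_nz hvne
  have hpvx : 3/2 ≤ ‖pv - (x : EE)‖ := by
    have h1 : ‖pv - v‖ = |1 - ‖v‖| := nz_sub_self hvne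
    have h2 : |1 - ‖v‖| ≤ 1/4 := by
      have := abs_norm_sub_norm_le (v + (x : EE)) v
      simp only [add_sub_cancel_left] at this
      have h3 : |‖v + (x : EE)‖ - ‖v‖| ≤ ‖(x : EE)‖ := this
      rw [hx1] at h3
      rw [abs_sub_comm]
      have h4 := abs_sub_abs_le_abs_sub (‖v‖) (1 : ℝ)
      -- direct: |‖v‖ - 1| ≤ |‖v‖ - ‖v+x‖| + |‖v+x‖ - 1| ≤ ‖x‖... simpler:
      have h5 : ‖v‖ - 1 ≤ ‖v + (x : EE)‖ := by
        have := norm_sub_norm_le v (v + (x : EE))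
        simp only [sub_add_cancel_left] at this
        have h6 : ‖v‖ - ‖v + (x : EE)‖ ≤ ‖-(x : EE)‖ := by
          calc ‖v‖ - ‖v + (x : EE)‖ ≤ ‖v - (v + (x : EE))‖ := norm_sub_norm_le _ _
            _ = ‖-(x : EE)‖ := by congr 1; abel
        rw [norm_neg, hx1] at h6
        linarith
      have h7 : 1 - ‖v‖ ≤ ‖v + (x : EE)‖ := by
        have : ‖v + (x : EE)‖ ≥ ‖(x : EE)‖ - ‖v‖ := by
          calc ‖(x : EE)‖ - ‖v‖ ≤ ‖(x : EE) - (-v)‖ := by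
                have := norm_sub_norm_le ((x : EE)) (-v)
                simpa using this
            _ = ‖v + (x : EE)‖ := by rw [sub_neg_eq_add, add_comm]
        rw [hx1] at this
        linarith
      rw [abs_le]
      constructor <;> [linarith [hvx, h5]; linarith [hvx, h7]]
    have h8 : ‖pv + (x : EE)‖ ≤ 1/2 := by
      calc ‖pv + (x : EE)‖ = ‖(pv - v) + (v + (x : EE))‖ := by congr 1; abel
        _ ≤ ‖pv - v‖ + ‖v + (x : EE)‖ := norm_add_le _ _
        _ ≤ 1/4 + 1/4 := by rw [h1]; exact add_le_add h2 hvx.le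
        _ = 1/2 := by norm_num
    have h9 : ‖pv - (x : EE)‖ ≥ ‖(2:ℝ) • (x : EE)‖ - ‖pv + (x : EE)‖ := by
      calc ‖(2:ℝ) • (x : EE)‖ - ‖pv + (x : EE)‖ ≤ ‖(2:ℝ) • (x : EE) - (pv + (x : EE))‖ :=
            norm_sub_norm_le _ _
        _ = ‖pv - (x : EE)‖ := by
            rw [← norm_neg]
            congr 1
            rw [two_smul]
            abel
    have h10 : ‖(2:ℝ) • (x : EE)‖ = 2 := by
      rw [norm_smul, hx1]
      norm_num
    linarith
  -- the final map misses `pv`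
  have h01 : (1:ℝ) ∈ Icc (0:ℝ) 1 := ⟨zero_le_one, le_refl 1⟩
  have hmiss : ∀ y, ‖w 1 y‖⁻¹ • w 1 y ≠ pv := by
    intro y heq
    rcases lt_or_ge (φ y) 1 with hlt | hge
    · have hFx := hφx y hlt
      have h5 : ‖w 1 y - (x:EE)‖ ≤ 3/50 := by
        have h := norm_add_le (w 1 y - F y) (F y - (x:EE))
        have he : (w 1 y - F y) + (F y - (x:EE)) = w 1 y - (x:EE) := by abel
        rw [he] at h
        linarith [hw_near 1 h01 y, hFx]
      have h6 : |1 - ‖w 1 y‖| ≤ 3/50 := by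
        have h := abs_norm_sub_norm_le ((x:EE)) (w 1 y)
        rw [hx1, norm_sub_rev] at h
        linarith [h, h5]
      have hne := hw_ne 1 h01 y
      have h7 : ‖(‖w 1 y‖⁻¹ • w 1 y) - (x:EE)‖ ≤ 6/50 := by
        have h8 := nz_sub_self hne
        have h := norm_add_le ((‖w 1 y‖⁻¹ • w 1 y) - w 1 y) (w 1 y - (x:EE))
        have he : ((‖w 1 y‖⁻¹ • w 1 y) - w 1 y) + (w 1 y - (x:EE))
            = (‖w 1 y‖⁻¹ • w 1 y) - (x:EE) := by abel
        rw [he, h8] at h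
        linarith
      rw [heq] at h7
      linarith [hpvx]
    · have hφeq : φ y = 1 := le_antisymm (hφ1 y) hge
      have hw1 : w 1 y = P (ι y) := by
        show F y + ((1:ℝ) * φ y) • (g y - F y) = P (ι y)
        rw [hφeq, mul_one, one_smul, add_sub_cancel]
      apply hvmem
      refine ⟨(‖v‖ * ‖w 1 y‖⁻¹, ι y), ?_⟩
      show (‖v‖ * ‖w 1 y‖⁻¹) • P (ι y) = v
      rw [← hw1, mul_smul, heq]
      exact (eq_smul_nz hvne).symm
  -- the intermediate generalized loop
  set W : I × (Fin 2 → I) → EE := fun a => w (a.1 : ℝ) a.2 with hWdef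
  have hWmem : ∀ a : I × (Fin 2 → I), (a.1 : ℝ) ∈ Icc (0:ℝ) 1 := fun a => a.1.2
  have hWne : ∀ a, W a ≠ 0 := fun a => hw_ne _ (hWmem a) a.2
  have htc : Continuous fun a : I × (Fin 2 → I) => (a.1 : ℝ) :=
    continuous_subtype_val.comp continuous_fst
  have hWc : Continuous W := by
    apply (hFc.comp continuous_snd).add
    exact (htc.mul (hφc.comp continuous_snd)).smul
      ((hgc.comp continuous_snd).sub (hFc.comp continuous_snd))
  have hWnc : Continuous fun a => ‖W a‖⁻¹ • W a :=
    ((hWc.norm.inv₀ fun a => norm_ne_zero_iff.mpr (hWne a)).smul hWc)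
  have hmemS : ∀ a, ‖W a‖⁻¹ • W a ∈ Metric.sphere (0 : EE) 1 := fun a =>
    mem_sphere_zero_iff_norm.mpr (norm_nz (hWne a))
  set mid : C(Fin 2 → I, Metric.sphere (0 : EE) 1) := ⟨fun y => ⟨‖w 1 y‖⁻¹ • w 1 y,
      mem_sphere_zero_iff_norm.mpr (norm_nz (hw_ne 1 h01 y))⟩, by
    refine Continuous.subtype_mk ?_ _
    have : Continuous fun y : Fin 2 → I => w 1 y := by
      apply hFc.add
      exact (continuous_const.mul hφc).smul (hgc.sub hFc)
    exact (this.norm.inv₀ fun y => norm_ne_zero_iff.mpr (hw_ne 1 h01 y)).smul this⟩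
    with hmid
  have hmidbd : ∀ y ∈ bd, mid y = x := by
    intro y hy
    apply Subtype.ext
    show ‖w 1 y‖⁻¹ • w 1 y = (x : EE)
    have hw0 : w 1 y = F y := by
      show F y + ((1:ℝ) * φ y) • (g y - F y) = F y
      rw [hφbd y hy, mul_zero, zero_smul, add_zero]
    rw [hw0, hbx y hy, hx1, inv_one, one_smul]
  -- first homotopy: from γ to mid
  have H1 : γ.1.HomotopyRel mid bd := by
    refine ⟨⟨⟨fun a => ⟨‖W a‖⁻¹ • W a, hmemS a⟩, Continuous.subtype_mk hWnc _⟩, ?_, ?_⟩, ?_⟩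
    · intro y
      apply Subtype.ext
      show ‖W (0, y)‖⁻¹ • W (0, y) = F y
      have hw0 : W (0, y) = F y := by
        show F y + (((0:I) : ℝ) * φ y) • (g y - F y) = F y
        norm_num
      rw [hw0, hF1 y, inv_one, one_smul]
    · intro y
      apply Subtype.ext
      show ‖W (1, y)‖⁻¹ • W (1, y) = ‖w 1 y‖⁻¹ • w 1 y
      have hw0 : W (1, y) = w 1 y := by
        show F y + (((1:I) : ℝ) * φ y) • (g y - F y) = F y + ((1:ℝ) * φ y) • (g y - F y)
        norm_num
      rw [hw0]
    · intro t y hy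
      apply Subtype.ext
      show ‖W (t, y)‖⁻¹ • W (t, y) = F y
      have hw0 : W (t, y) = F y := by
        show F y + (((t:I) : ℝ) * φ y) • (g y - F y) = F y
        rw [hφbd y hy, mul_zero, zero_smul, add_zero]
      rw [hw0, hF1 y, inv_one, one_smul]
  -- second homotopy: contract through the stereographic chart at pv
  set ψ := stereographic hpv1 with hψdef
  have hψsource : ψ.source = {(⟨pv, by simp [hpv1]⟩ : Metric.sphere (0:EE) 1)}ᶜ :=
    stereographic_source hpv1
  have hmid_src : ∀ y, mid y ∈ ψ.source := by
    intro y
    rw [hψsource]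
    simp only [mem_compl_iff, mem_singleton_iff]
    intro h
    exact hmiss y (congrArg Subtype.val h)
  have hx_src : x ∈ ψ.source := by
    rw [hψsource]
    simp only [mem_compl_iff, mem_singleton_iff]
    intro h
    have h2 : (x : EE) = pv := congrArg Subtype.val h
    rw [h2] at hpvx
    simp at hpvx
    linarith [hpvx]
  have hψsymmc : Continuous ψ.symm := by
    have h := ψ.continuousOn_symm
    rw [show ψ.target = univ from stereographic_target hpv1] at h
    exact continuousOn_univ.mp h
  have hψmidc : Continuous fun y => ψ (mid y) :=
    ψ.continuousOn.comp_continuous mid.continuous hmid_src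
  have H2 : mid.HomotopyRel (ContinuousMap.const (Fin 2 → I) x) bd := by
    refine ⟨⟨⟨fun a => ψ.symm ((1 - (a.1:ℝ)) • ψ (mid a.2) + (a.1:ℝ) • ψ x), ?_⟩, ?_, ?_⟩, ?_⟩
    · apply hψsymmc.comp
      exact ((continuous_const.sub htc).smul (hψmidc.comp continuous_snd)).add
        (htc.smul continuous_const)
    · intro y
      show ψ.symm ((1 - ((0:I):ℝ)) • ψ (mid y) + ((0:I):ℝ) • ψ x) = mid y
      have h0 : ((0:I):ℝ) = 0 := rfl
      rw [h0, sub_zero, one_smul, zero_smul, add_zero]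
      exact ψ.left_inv (hmid_src y)
    · intro y
      show ψ.symm ((1 - ((1:I):ℝ)) • ψ (mid y) + ((1:I):ℝ) • ψ x) = x
      have h0 : ((1:I):ℝ) = 1 := rfl
      rw [h0, sub_self, zero_smul, one_smul, zero_add]
      exact ψ.left_inv hx_src
    · intro t y hy
      show ψ.symm ((1 - ((t:I):ℝ)) • ψ (mid y) + ((t:I):ℝ) • ψ x) = mid y
      have hm : mid y = x := hmidbd y hy
      have h2 : (1 - ((t:I):ℝ)) • ψ (mid y) + ((t:I):ℝ) • ψ x = ψ x := by
        rw [hm, ← add_smul, sub_add_cancel, one_smul]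
      rw [h2, ψ.left_inv hx_src, hm]
  exact ⟨H1.trans H2⟩

end PiTwoAux

/-- The second homotopy group of the 3-sphere `S³ ⊆ ℝ⁴` is trivial: for any basepoint `x`,
`π₂(S³, x)` has exactly one element. -/
theorem pi_two_sphere_three_trivial
    (x : Metric.sphere (0 : EuclideanSpace ℝ (Fin 4)) 1) :
    Nonempty (π_ 2 (Metric.sphere (0 : EuclideanSpace ℝ (Fin 4)) 1) x) ∧
    Subsingleton (π_ 2 (Metric.sphere (0 : EuclideanSpace ℝ (Fin 4)) 1) x) := by
  constructor
  · exact ⟨default⟩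
  · constructor
    intro a b
    refine Quotient.inductionOn₂ a b fun γ β => ?_
    exact Quotient.sound ((PiTwoAux.genLoop_homotopic_const x γ).trans
      (PiTwoAux.genLoop_homotopic_const x β).symm)
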